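/- Let P ∈ ℝ^{n×n} be symmetric positive definite, K ∈ ℝ^{m×n} with every row K_j nonzero, and v ∈ ℝ^m with |v_j| < 1 for every j ∈ {1, …, m}. Define r_L = min over j ∈ {1, …, m} of (1 − |v_j|)² / (K_j P^{−1} K_j^⊤). Then for every e ∈ ℝ^n with e^⊤ P e ≤ r_L, one has |K_j e + v_j| ≤ 1 for every j, and consequently φ(K e + v) = K e + v; i.e., the ellipsoid ℰ(P, r_L) = { e : e^⊤ P e ≤ r_L } is contained in the region of linearity of the saturation. -/

import Mathlib

open Matrix


theorem posdef_dot_pos {n : ℕ} {P : Matrix (Fin n) (Fin n) ℝ} (hP : P.PosDef)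
    {x : Fin n → ℝ} (hx : x ≠ 0) : 0 < x ⬝ᵥ P.mulVec x := by
  simpa using hP.re_dotProduct_pos hx

theorem dot_symm {n : ℕ} {P : Matrix (Fin n) (Fin n) ℝ} (hP : P.PosDef)
    (x y : Fin n → ℝ) : y ⬝ᵥ P.mulVec x = x ⬝ᵥ P.mulVec y := by
  have hsym : Pᵀ = P := by
    simpa [Matrix.IsHermitian, Matrix.conjTranspose_eq_transpose_of_trivial] using hP.isHermitian
  rw [Matrix.dotProduct_mulVec, ← Matrix.mulVec_transpose, hsym, dotProduct_comm]

theorem posdef_cs {n : ℕ} {P : Matrix (Fin n) (Fin n) ℝ} (hP : P.PosDef) (x y : Fin n → ℝ) :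
    (x ⬝ᵥ P.mulVec y) ^ 2 ≤ (x ⬝ᵥ P.mulVec x) * (y ⬝ᵥ P.mulVec y) := by
  by_cases hx : x = 0
  · simp [hx]
  · have ha : 0 < x ⬝ᵥ P.mulVec x := posdef_dot_pos hP hx
    set a := x ⬝ᵥ P.mulVec x with ha'
    set b := x ⬝ᵥ P.mulVec y with hb'
    set c := y ⬝ᵥ P.mulVec y with hc'
    have key : ∀ t : ℝ, 0 ≤ a * t ^ 2 + 2 * b * t + c := by
      intro t
      have h0 : 0 ≤ (t • x + y) ⬝ᵥ P.mulVec (t • x + y) := by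
        simpa using hP.posSemidef.re_dotProduct_nonneg (t • x + y)
      have hexp : (t • x + y) ⬝ᵥ P.mulVec (t • x + y) = a * t ^ 2 + 2 * b * t + c := by
        rw [ha', hb', hc']
        simp only [Matrix.mulVec_add, Matrix.mulVec_smul, dotProduct_add,
          add_dotProduct, dotProduct_smul, smul_dotProduct,
          dot_symm hP y x, smul_eq_mul]
        ring
      linarith [hexp ▸ h0]
    have hk := key (-(b / a))
    have hb : a * (b / a) = b := mul_div_cancel₀ b ha.ne'
    nlinarith [mul_nonneg ha.le hk, hb]

/-- The scalar saturation function `sat(x) = sign(x) · min(|x|, 1)`. -/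
noncomputable def sat (x : ℝ) : ℝ := Real.sign x * min |x| 1

/-- The componentwise saturation function `φ : ℝ^m → ℝ^m`. -/
noncomputable def satVec {m : ℕ} (u : Fin m → ℝ) : Fin m → ℝ := fun j => sat (u j)

theorem sat_eq_self {u : ℝ} (h : |u| ≤ 1) : sat u = u := by
  unfold sat
  rw [min_eq_left h]
  rcases lt_trichotomy u 0 with h1 | h1 | h1
  · rw [Real.sign_of_neg h1, abs_of_neg h1]; ring
  · simp [h1]
  · rw [Real.sign_of_pos h1, abs_of_pos h1]; ring

/-- For `P ≻ 0`, `K` with nonzero rows, and `v` with `|v_j| < 1`, setting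
`r_L = min_j (1 − |v_j|)² / (K_j P⁻¹ K_jᵀ)`, every `e` with `eᵀ P e ≤ r_L`
satisfies `|K_j e + v_j| ≤ 1` for every `j`, and hence `φ(K e + v) = K e + v`:
the ellipsoid `ℰ(P, r_L)` lies in the region of linearity of the saturation. -/
theorem stmt8 {n m : ℕ} (hm : 0 < m)
    (P : Matrix (Fin n) (Fin n) ℝ) (hP : P.PosDef)
    (K : Matrix (Fin m) (Fin n) ℝ) (hK : ∀ j, K j ≠ 0)
    (v : Fin m → ℝ) (hv : ∀ j, |v j| < 1)
    (rL : ℝ)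
    (hrL : rL = Finset.univ.inf' ⟨⟨0, hm⟩, Finset.mem_univ _⟩
      (fun j : Fin m => (1 - |v j|) ^ 2 / (K j ⬝ᵥ P⁻¹.mulVec (K j)))) :
    ∀ e : Fin n → ℝ, e ⬝ᵥ P.mulVec e ≤ rL →
      (∀ j, |K.mulVec e j + v j| ≤ 1) ∧ satVec (K.mulVec e + v) = K.mulVec e + v := by
  intro e he
  have habs : ∀ j, |K.mulVec e j + v j| ≤ 1 := by
    intro j
    set k := K j with hk'
    have hinv : (P⁻¹).PosDef := hP.inv
    have hc : 0 < k ⬝ᵥ P⁻¹.mulVec k := posdef_dot_pos hinv (hK j)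
    have hrle : rL ≤ (1 - |v j|) ^ 2 / (k ⬝ᵥ P⁻¹.mulVec k) := by
      rw [hrL]; exact Finset.inf'_le _ (Finset.mem_univ j)
    set x := P⁻¹.mulVec k with hx'
    have hdet : IsUnit P.det := hP.det_pos.ne'.isUnit
    have hPx : P.mulVec x = k := by
      rw [hx', Matrix.mulVec_mulVec, Matrix.mul_nonsing_inv _ hdet, Matrix.one_mulVec]
    have h1 : x ⬝ᵥ P.mulVec e = k ⬝ᵥ e := by
      rw [dot_symm hP e x, hPx, dotProduct_comm]
    have h2 : x ⬝ᵥ P.mulVec x = k ⬝ᵥ P⁻¹.mulVec k := by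
      rw [hPx, dotProduct_comm]
    have hcs := posdef_cs hP x e
    rw [h1, h2] at hcs
    have h3 : (k ⬝ᵥ e) ^ 2 ≤ (1 - |v j|) ^ 2 := by
      calc (k ⬝ᵥ e) ^ 2 ≤ (k ⬝ᵥ P⁻¹.mulVec k) * (e ⬝ᵥ P.mulVec e) := hcs
        _ ≤ (k ⬝ᵥ P⁻¹.mulVec k) * rL := by
            exact mul_le_mul_of_nonneg_left he hc.le
        _ ≤ (k ⬝ᵥ P⁻¹.mulVec k) * ((1 - |v j|) ^ 2 / (k ⬝ᵥ P⁻¹.mulVec k)) := by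
            exact mul_le_mul_of_nonneg_left hrle hc.le
        _ = (1 - |v j|) ^ 2 := mul_div_cancel₀ _ hc.ne'
    have hm : K.mulVec e j = k ⬝ᵥ e := rfl
    rw [hm]
    have hvj := hv j
    have h4 : |k ⬝ᵥ e| ≤ 1 - |v j| := by
      nlinarith [abs_nonneg (k ⬝ᵥ e), sq_abs (k ⬝ᵥ e), abs_nonneg (v j)]
    calc |k ⬝ᵥ e + v j| ≤ |k ⬝ᵥ e| + |v j| := abs_add_le _ _
      _ ≤ 1 := by linarith
  refine ⟨habs, ?_⟩
  funext j
  show sat ((K.mulVec e + v) j) = _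
  rw [Pi.add_apply]
  exact sat_eq_self (habs j)
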